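/- Let T and T' be triangles in ℝ² (convex hulls of affinely independent triples of points), and for δ ∈ ℝ let M_δ : ℝ² → ℝ² be the shear M_δ(x, y) = (x + δy, y). Then the set { δ ∈ ℝ : M_δ(T) is congruent to T' } is finite (its cardinality is at most six). -/

import Mathlib

open MeasureTheory

noncomputable section

/-- The Euclidean plane. -/
abbrev Plane : Type := EuclideanSpace ℝ (Fin 2)

/-- A triangle is the convex hull of three affinely independent points. -/
def IsTriangle (T : Set Plane) : Prop :=
  ∃ p q r : Plane, AffineIndependent ℝ ![p, q, r] ∧ T = convexHull ℝ {p, q, r}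

/-- Two subsets of the plane are congruent if one is the image of the other under
an isometry of the plane (reflections allowed). -/
def PlaneCongruent (A B : Set Plane) : Prop :=
  ∃ f : Plane ≃ᵢ Plane, f '' A = B

/-- A tiling of `A ⊆ ℝ²`: a countable collection of compact sets whose interiors are
pairwise disjoint and whose union is `A`. -/
def IsTilingOf (𝒯 : Set (Set Plane)) (A : Set Plane) : Prop :=
  𝒯.Countable ∧ (∀ T ∈ 𝒯, IsCompact T) ∧
    (∀ T ∈ 𝒯, ∀ T' ∈ 𝒯, T ≠ T' → interior T ∩ interior T' = ∅) ∧
    ⋃₀ 𝒯 = A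

/-- A vertex of a (convex polygonal) tile is an extreme point of it. -/
def IsVertexOf (p : Plane) (T : Set Plane) : Prop := p ∈ Set.extremePoints ℝ T

/-- An edge of a convex polygon: a nondegenerate segment between two vertices that
lies in the frontier of the polygon. -/
def IsEdgeOf (e : Set Plane) (T : Set Plane) : Prop :=
  ∃ u v : Plane, u ≠ v ∧ IsVertexOf u T ∧ IsVertexOf v T ∧
    e = segment ℝ u v ∧ e ⊆ frontier T

/-- A tiling by convex polygons is vertex-to-vertex if the intersection of any two
distinct tiles is empty, a common vertex, or a common entire edge. -/
def IsVertexToVertex (𝒯 : Set (Set Plane)) : Prop :=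
  ∀ T ∈ 𝒯, ∀ T' ∈ 𝒯, T ≠ T' →
    T ∩ T' = ∅ ∨
    (∃ p : Plane, T ∩ T' = {p} ∧ IsVertexOf p T ∧ IsVertexOf p T') ∨
    (IsEdgeOf (T ∩ T') T ∧ IsEdgeOf (T ∩ T') T')

/-- A convex polygon with exactly `n` vertices: a compact convex set whose set of
extreme points is finite with exactly `n` elements. -/
def IsConvexPolygon (n : ℕ) (T : Set Plane) : Prop :=
  IsCompact T ∧ Convex ℝ T ∧ (Set.extremePoints ℝ T).Finite ∧
    (Set.extremePoints ℝ T).ncard = n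

/-- `A ≃ B`: `B` is the image of `A` under `z ↦ s·z + t` with `s ∈ {1, -1}`. -/
def TransCong (A B : Set Plane) : Prop :=
  ∃ s : ℝ, (s = 1 ∨ s = -1) ∧ ∃ t : Plane, B = (fun z => s • z + t) '' A

/-- The shear map `M_δ (x, y) = (x + δy, y)`. -/
def shear (δ : ℝ) (p : Plane) : Plane :=
  (WithLp.equiv 2 (Fin 2 → ℝ)).symm ![p 0 + δ * p 1, p 1]

lemma shear_apply0 (δ : ℝ) (p : Plane) : shear δ p 0 = p 0 + δ * p 1 := rfl
lemma shear_apply1 (δ : ℝ) (p : Plane) : shear δ p 1 = p 1 := rfl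

def shearL (δ : ℝ) : Plane ≃ₗ[ℝ] Plane where
  toFun := shear δ
  invFun := shear (-δ)
  left_inv p := by ext i; fin_cases i <;> simp [shear_apply0, shear_apply1] <;> ring
  right_inv p := by ext i; fin_cases i <;> simp [shear_apply0, shear_apply1] <;> ring
  map_add' x y := by ext i; fin_cases i <;> simp [shear_apply0, shear_apply1] <;> ring
  map_smul' c x := by ext i; fin_cases i <;> simp [shear_apply0, shear_apply1, smul_eq_mul] <;> ring

lemma dist_shear_sq (δ : ℝ) (a b : Plane) :
    dist (shear δ a) (shear δ b) ^ 2
      = (a 0 - b 0 + δ * (a 1 - b 1)) ^ 2 + (a 1 - b 1) ^ 2 := by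
  rw [EuclideanSpace.dist_eq, Real.sq_sqrt (by positivity)]
  simp [Fin.sum_univ_two, shear_apply0, shear_apply1, Real.dist_eq, sq_abs]
  ring

lemma extreme_first {p q r : Plane} (h : AffineIndependent ℝ ![p, q, r]) :
    p ∈ Set.extremePoints ℝ (convexHull ℝ {p, q, r}) := by
  have hncol : ¬Collinear ℝ ({p, q, r} : Set Plane) :=
    affineIndependent_iff_not_collinear_set.mp h
  have hpseg : p ∉ convexHull ℝ ({q, r} : Set Plane) := by
    intro hp
    exact hncol (collinear_insert_of_mem_affineSpan_pair
      (convexHull_subset_affineSpan _ hp))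
  obtain ⟨f, u, hfu, hup⟩ := geometric_hahn_banach_closed_point
    (convex_convexHull ℝ _) (((Set.finite_singleton r).insert q).isCompact_convexHull (𝕜 := ℝ)).isClosed hpseg
  -- every point of the hull has f y ≤ f p with equality only at p
  have key : ∀ y ∈ convexHull ℝ ({p, q, r} : Set Plane), f y ≤ f p ∧ (f y = f p → y = p) := by
    intro y hy
    rw [show ({p, q, r} : Set Plane) = insert p {q, r} from rfl,
      convexHull_insert ⟨q, by simp⟩, mem_convexJoin] at hy
    obtain ⟨x, hx, z, hz, hyz⟩ := hy
    rw [Set.mem_singleton_iff] at hx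
    obtain ⟨a, b, ha, hb, hab, hy⟩ := hyz
    rw [hx] at hy
    have hfz : f z < u := hfu z hz
    have hfy : f y = a * f p + b * f z := by
      rw [← hy]; simp [mul_comm]
    have hid : a * f p + b * f p = f p := by rw [← add_mul, hab, one_mul]
    have hzp : f z < f p := hfz.trans hup
    have hble : b * f z ≤ b * f p := mul_le_mul_of_nonneg_left hzp.le hb
    constructor
    · linarith
    · intro hyp
      have hb0 : b = 0 := by
        by_contra hb'
        have hbpos : 0 < b := lt_of_le_of_ne hb (Ne.symm hb')
        have := mul_lt_mul_of_pos_left hzp hbpos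
        linarith
      have ha1 : a = 1 := by linarith
      rw [← hy, hb0, ha1]; simp
  refine ⟨subset_convexHull ℝ _ (by simp), ?_⟩
  intro x1 hx1 x2 hx2 hseg
  obtain ⟨a, b, ha, hb, hab, hx⟩ := hseg
  have h1 := key x1 hx1
  have h2 := key x2 hx2
  have hfp : f p = a * f x1 + b * f x2 := by rw [← hx]; simp [mul_comm]
  have e1 : f x1 = f p := by
    by_contra h'
    have hlt : f x1 < f p := lt_of_le_of_ne h1.1 h'
    have hid : a * f p + b * f p = f p := by rw [← add_mul, hab, one_mul]
    have := mul_lt_mul_of_pos_left hlt ha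
    have := mul_le_mul_of_nonneg_left h2.1 hb.le
    linarith
  have e2 : f x2 = f p := by
    by_contra h'
    have hlt : f x2 < f p := lt_of_le_of_ne h2.1 h'
    have hid : a * f p + b * f p = f p := by rw [← add_mul, hab, one_mul]
    have := mul_lt_mul_of_pos_left hlt hb
    have := mul_le_mul_of_nonneg_left h1.1 ha.le
    linarith
  exact h1.2 e1

lemma perm_swap01 {p q r : Plane} (h : AffineIndependent ℝ ![p, q, r]) :
    AffineIndependent ℝ ![q, p, r] := by
  have := h.comp_embedding (Equiv.swap (0 : Fin 3) 1).toEmbedding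
  have he : ![p, q, r] ∘ ⇑(Equiv.swap (0 : Fin 3) 1).toEmbedding = ![q, p, r] := by
    funext i
    fin_cases i <;> simp [Equiv.swap_apply_def] <;> rfl
  rwa [he] at this

lemma perm_swap02 {p q r : Plane} (h : AffineIndependent ℝ ![p, q, r]) :
    AffineIndependent ℝ ![r, q, p] := by
  have := h.comp_embedding (Equiv.swap (0 : Fin 3) 2).toEmbedding
  have he : ![p, q, r] ∘ ⇑(Equiv.swap (0 : Fin 3) 2).toEmbedding = ![r, q, p] := by
    funext i
    fin_cases i <;> simp [Equiv.swap_apply_def] <;> rfl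
  rwa [he] at this

lemma extremePoints_triangle {p q r : Plane} (h : AffineIndependent ℝ ![p, q, r]) :
    Set.extremePoints ℝ (convexHull ℝ {p, q, r}) = {p, q, r} := by
  apply Set.Subset.antisymm extremePoints_convexHull_subset
  rintro x (rfl | rfl | rfl)
  · exact extreme_first h
  · have := extreme_first (perm_swap01 h)
    rwa [Set.insert_comm] at this
  · have := extreme_first (perm_swap02 h)
    rwa [show ({x, q, p} : Set Plane) = {p, q, x} from by
      ext y; simp; tauto] at this

lemma image_extremePoints_subset (e : Plane ≃ᵃ[ℝ] Plane) (s : Set Plane) :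
    e '' Set.extremePoints ℝ s ⊆ Set.extremePoints ℝ (e '' s) := by
  rintro _ ⟨a, ha, rfl⟩
  refine ⟨Set.mem_image_of_mem _ ha.1, ?_⟩
  rintro _ ⟨y1, hy1, rfl⟩ _ ⟨y2, hy2, rfl⟩ hseg
  have himg : (e : Plane → Plane) '' openSegment ℝ y1 y2 = openSegment ℝ (e y1) (e y2) := by
    simpa using image_openSegment _ e.toAffineMap y1 y2
  rw [← himg] at hseg
  obtain ⟨z, hz, hze⟩ := hseg
  obtain rfl : z = a := e.injective hze
  obtain h1 := ha.2 hy1 hy2 hz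
  exact by rw [h1]

lemma image_extremePoints_affine (e : Plane ≃ᵃ[ℝ] Plane) (s : Set Plane) :
    e '' Set.extremePoints ℝ s = Set.extremePoints ℝ (e '' s) := by
  apply Set.Subset.antisymm (image_extremePoints_subset e s)
  intro b hb
  have := image_extremePoints_subset e.symm (e '' s) (Set.mem_image_of_mem _ hb)
  have hss : e.symm '' (e '' s) = s := by
    rw [← Set.image_comp]
    simp
  rw [hss] at this
  exact ⟨e.symm b, this, by simp⟩

lemma sum3 [DecidableEq Plane] {a b c : Plane} (hab : a ≠ b) (hac : a ≠ c) (hbc : b ≠ c) :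
    ∑ x ∈ ({a, b, c} : Finset Plane), ∑ y ∈ ({a, b, c} : Finset Plane), dist x y ^ 2
      = 2 * (dist a b ^ 2 + dist a c ^ 2 + dist b c ^ 2) := by
  have ha : a ∉ ({b, c} : Finset Plane) := by simp [hab, hac]
  have hb : b ∉ ({c} : Finset Plane) := by simp [hbc]
  simp only [show ({a, b, c} : Finset Plane) = insert a (insert b {c}) from rfl,
    Finset.sum_insert ha, Finset.sum_insert hb, Finset.sum_singleton]
  simp [dist_comm b a, dist_comm c a, dist_comm c b]
  ring

lemma collinear_of_snd_eq {p q r : Plane} (h1 : p 1 = q 1) (h2 : p 1 = r 1) :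
    Collinear ℝ ({p, q, r} : Set Plane) := by
  rw [collinear_iff_exists_forall_eq_smul_vadd]
  refine ⟨p, EuclideanSpace.single 0 1, ?_⟩
  rintro x (rfl | rfl | rfl)
  · exact ⟨0, by simp⟩
  · refine ⟨x 0 - p 0, ?_⟩
    ext i
    fin_cases i <;>
      simp [EuclideanSpace.single_apply, h1]
  · refine ⟨x 0 - p 0, ?_⟩
    ext i
    fin_cases i <;>
      simp [EuclideanSpace.single_apply, h2]

/-- For triangles `T`, `T'`, the set of `δ` with `M_δ(T) ≅ T'` is finite,
of cardinality at most six. -/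
theorem statement17 (T T' : Set Plane) (hT : IsTriangle T) (hT' : IsTriangle T') :
    {δ : ℝ | PlaneCongruent (shear δ '' T) T'}.Finite ∧
    {δ : ℝ | PlaneCongruent (shear δ '' T) T'}.encard ≤ 6 := by
  classical
  obtain ⟨p, q, r, hind, rfl⟩ := hT
  obtain ⟨p', q', r', hind', rfl⟩ := hT'
  have hne : ∀ {a b c : Plane}, AffineIndependent ℝ ![a, b, c] → a ≠ b ∧ a ≠ c ∧ b ≠ c := by
    intro a b c h
    refine ⟨fun hab => ?_, fun hac => ?_, fun hbc => ?_⟩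
    · have := h.injective (show ![a,b,c] 0 = ![a,b,c] 1 by simpa using hab); simp at this
    · have := h.injective (show ![a,b,c] 0 = ![a,b,c] 2 by simpa using hac); simp at this
    · have := h.injective (show ![a,b,c] 1 = ![a,b,c] 2 by simpa using hbc); simp at this
  obtain ⟨hpq, hpr, hqr⟩ := hne hind
  obtain ⟨hpq', hpr', hqr'⟩ := hne hind'
  set K := dist p' q' ^ 2 + dist p' r' ^ 2 + dist q' r' ^ 2 with hKdef
  have main : ∀ δ : ℝ,
      PlaneCongruent (shear δ '' convexHull ℝ {p, q, r}) (convexHull ℝ {p', q', r'}) →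
      dist (shear δ p) (shear δ q) ^ 2 + dist (shear δ p) (shear δ r) ^ 2
        + dist (shear δ q) (shear δ r) ^ 2 = K := by
    rintro δ ⟨f, hf⟩
    set e : Plane ≃ᵃ[ℝ] Plane :=
      (shearL δ).toAffineEquiv.trans f.toRealAffineIsometryEquiv.toAffineEquiv with hedef
    have he : ∀ x, e x = f (shear δ x) := by
      intro x
      simp [hedef, IsometryEquiv.coeFn_toRealAffineIsometryEquiv, shearL]
    have himg : e '' convexHull ℝ {p, q, r} = convexHull ℝ {p', q', r'} := by
      rw [← hf, ← Set.image_comp]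
      exact Set.image_congr fun x _ => he x
    have hindE : AffineIndependent ℝ ![e p, e q, e r] := by
      have := hind.map' e.toAffineMap e.injective
      rwa [show (⇑e.toAffineMap ∘ ![p, q, r]) = ![e p, e q, e r] from by
        funext i; fin_cases i <;> simp] at this
    have hhull : convexHull ℝ ({e p, e q, e r} : Set Plane) = convexHull ℝ {p', q', r'} := by
      have himg2 : ⇑e '' convexHull ℝ ({p, q, r} : Set Plane)
          = convexHull ℝ (⇑e '' ({p, q, r} : Set Plane)) := by
        simpa using AffineMap.image_convexHull e.toAffineMap ({p, q, r} : Set Plane)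
      rw [← himg, himg2]
      congr 1
      simp [Set.image_insert_eq]
    have hveq : ({e p, e q, e r} : Set Plane) = {p', q', r'} := by
      rw [← extremePoints_triangle hindE, hhull, extremePoints_triangle hind']
    have hfs : ({e p, e q, e r} : Finset Plane) = ({p', q', r'} : Finset Plane) := by
      apply Finset.coe_injective
      simpa using hveq
    obtain ⟨hepq, hepr, heqr⟩ := hne hindE
    have hsumL := sum3 hepq hepr heqr
    have hsumR := sum3 hpq' hpr' hqr'
    rw [hfs, hsumR] at hsumL
    have hd : ∀ x y : Plane, dist (e x) (e y) = dist (shear δ x) (shear δ y) := by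
      intro x y; rw [he, he, f.dist_eq]
    rw [hd, hd, hd] at hsumL
    linarith
  set A : ℝ := (p 1 - q 1) ^ 2 + (p 1 - r 1) ^ 2 + (q 1 - r 1) ^ 2 with hAdef
  set B : ℝ := 2 * ((p 0 - q 0) * (p 1 - q 1) + (p 0 - r 0) * (p 1 - r 1)
    + (q 0 - r 0) * (q 1 - r 1)) with hBdef
  set C : ℝ := (p 0 - q 0) ^ 2 + (p 0 - r 0) ^ 2 + (q 0 - r 0) ^ 2 + A - K with hCdef
  have hquad : ∀ δ ∈ {δ : ℝ | PlaneCongruent (shear δ '' convexHull ℝ {p, q, r})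
      (convexHull ℝ {p', q', r'})}, A * δ ^ 2 + B * δ + C = 0 := by
    intro δ hδ
    have h := main δ hδ
    rw [dist_shear_sq, dist_shear_sq, dist_shear_sq] at h
    rw [hAdef, hBdef, hCdef, hAdef]
    linear_combination h
  have hA : A ≠ 0 := by
    intro hA0
    have s1 : p 1 = q 1 := by nlinarith [sq_nonneg (p 1 - q 1), sq_nonneg (p 1 - r 1), sq_nonneg (q 1 - r 1)]
    have s2 : p 1 = r 1 := by nlinarith [sq_nonneg (p 1 - q 1), sq_nonneg (p 1 - r 1), sq_nonneg (q 1 - r 1)]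
    exact (affineIndependent_iff_not_collinear_set.mp hind) (collinear_of_snd_eq s1 s2)
  set s : ℝ := Real.sqrt (B ^ 2 - 4 * A * C) with hsdef
  have hsub : {δ : ℝ | PlaneCongruent (shear δ '' convexHull ℝ {p, q, r})
      (convexHull ℝ {p', q', r'})} ⊆ {(-B + s) / (2 * A), (-B - s) / (2 * A)} := by
    intro δ hδ
    have hq := hquad δ hδ
    have hdisc : (2 * A * δ + B) ^ 2 = B ^ 2 - 4 * A * C := by linear_combination 4 * A * hq
    have habs : s = |2 * A * δ + B| := by rw [hsdef, ← hdisc, Real.sqrt_sq_eq_abs]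
    have h2A : (2 * A) ≠ 0 := by simpa using hA
    rcases abs_cases (2 * A * δ + B) with ⟨h1, _⟩ | ⟨h1, _⟩
    · left
      rw [habs, h1]
      field_simp
      ring
    · right
      rw [Set.mem_singleton_iff, habs, h1]
      field_simp
      ring
  constructor
  · exact (Set.finite_singleton _ |>.insert _).subset hsub
  · refine le_trans (Set.encard_mono hsub) (le_trans (Set.encard_insert_le _ _) ?_)
    rw [Set.encard_singleton]
    norm_num
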